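/- Let $H_1, H_2, H_3$ be complex Hilbert spaces, let $T : H_1 \to H_2$ and $S : H_2 \to H_3$ be closed, densely defined (possibly unbounded) linear operators such that $S \circ T = 0$ (i.e. for every $x$ in the domain of $T$, $Tx$ lies in the domain of $S$ and $S(Tx) = 0$), and let $C > 0$ be a constant. Let $g \in H_2$ be an element of the domain of $S$ with $Sg = 0$. Then there exists $v$ in the domain of $T$ with $Tv = g$ and $\|v\| \leq C$ if and only if for every $u$ in the intersection of the domain of $S$ and the domain of the adjoint $T^*$ one has $|\langle u, g \rangle|^2 \leq C^2 \left( \|T^* u\|^2 + \|S u\|^2 \right)$. -/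

import Mathlib

open LinearPMap

/-- Functional-analytic criterion (Lemma 5.3 of the paper) for solving `T v = g` with a
norm bound `‖v‖ ≤ C`, for closed densely defined operators `T`, `S` between complex Hilbert
spaces with `S ∘ T = 0`. -/
theorem solvability_criterion_closed_densely_defined
    {H₁ H₂ H₃ : Type*}
    [NormedAddCommGroup H₁] [InnerProductSpace ℂ H₁] [CompleteSpace H₁]
    [NormedAddCommGroup H₂] [InnerProductSpace ℂ H₂] [CompleteSpace H₂]
    [NormedAddCommGroup H₃] [InnerProductSpace ℂ H₃] [CompleteSpace H₃]
    (T : H₁ →ₗ.[ℂ] H₂) (S : H₂ →ₗ.[ℂ] H₃)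
    (hT_closed : T.IsClosed) (hS_closed : S.IsClosed)
    (hT_dense : Dense (T.domain : Set H₁)) (hS_dense : Dense (S.domain : Set H₂))
    (hST : ∀ x : T.domain, ∃ hx : (T x : H₂) ∈ S.domain, S ⟨T x, hx⟩ = 0)
    (C : ℝ) (hC : 0 < C)
    (g : H₂) (hg : g ∈ S.domain) (hSg : S ⟨g, hg⟩ = 0) :
    (∃ v : T.domain, T v = g ∧ ‖(v : H₁)‖ ≤ C) ↔
      ∀ (u : H₂) (huS : u ∈ S.domain) (huT : u ∈ T.adjoint.domain),
        ‖(inner ℂ u g : ℂ)‖ ^ 2 ≤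
          C ^ 2 * (‖T.adjoint ⟨u, huT⟩‖ ^ 2 + ‖S ⟨u, huS⟩‖ ^ 2) := by
  constructor
  · rintro ⟨v, hTv, hv⟩ u huS huT
    have h1 : (inner ℂ u g : ℂ) = inner ℂ (T.adjoint ⟨u, huT⟩ : H₁) (v : H₁) := by
      have h := adjoint_isFormalAdjoint hT_dense ⟨u, huT⟩ v
      rw [h, hTv]
    have h2 : ‖(inner ℂ u g : ℂ)‖ ≤ C * ‖T.adjoint ⟨u, huT⟩‖ := by
      rw [h1]
      calc ‖(inner ℂ (T.adjoint ⟨u, huT⟩ : H₁) (v : H₁) : ℂ)‖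
          ≤ ‖T.adjoint ⟨u, huT⟩‖ * ‖(v : H₁)‖ := norm_inner_le_norm _ _
        _ ≤ ‖T.adjoint ⟨u, huT⟩‖ * C := by
            exact mul_le_mul_of_nonneg_left hv (norm_nonneg _)
        _ = C * ‖T.adjoint ⟨u, huT⟩‖ := mul_comm _ _
    nlinarith [norm_nonneg (inner ℂ u g : ℂ), norm_nonneg (T.adjoint ⟨u, huT⟩),
      norm_nonneg (S ⟨u, huS⟩), sq_nonneg (‖S ⟨u, huS⟩‖ * C)]
  · intro hEst
    -- the kernel of `S` as a closed submodule of `H₂`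
    set N : Submodule ℂ H₂ := S.graph.comap (LinearMap.inl ℂ H₂ H₃) with hN_def
    have hN_mem : ∀ x : H₂, x ∈ N ↔ ∃ hx : x ∈ S.domain, S ⟨x, hx⟩ = 0 := by
      intro x
      constructor
      · intro hx
        rcases S.mem_graph_iff.1 hx with ⟨y, hy1, hy2⟩
        simp only [LinearMap.inl_apply] at hy1 hy2
        refine ⟨hy1 ▸ y.2, ?_⟩
        rw [← hy2]
        congr 1
        exact Subtype.ext hy1.symm
      · rintro ⟨hx, hx0⟩
        exact S.mem_graph_iff.2 ⟨⟨x, hx⟩, rfl, hx0⟩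
    have hN_closed : IsClosed (N : Set H₂) := by
      have : (N : Set H₂) = (fun x : H₂ => (x, (0 : H₃))) ⁻¹' (S.graph : Set (H₂ × H₃)) := rfl
      rw [this]
      exact hS_closed.preimage (Continuous.prodMk continuous_id continuous_const)
    haveI : CompleteSpace N := hN_closed.completeSpace_coe
    have hgN : g ∈ N := (hN_mem g).2 ⟨hg, hSg⟩
    have hTxN : ∀ x : T.domain, (T x : H₂) ∈ N := fun x => by
      obtain ⟨hx, hx0⟩ := hST x
      exact (hN_mem _).2 ⟨hx, hx0⟩
    -- key estimate for every `u` in the domain of the adjoint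
    have key : ∀ u (huT : u ∈ T.adjoint.domain),
        ‖(inner ℂ u g : ℂ)‖ ≤ C * ‖T.adjoint ⟨u, huT⟩‖ := by
      intro u huT
      set u₁ : H₂ := (N.orthogonalProjectionOnto u : H₂) with hu₁_def
      have hu₁N : u₁ ∈ N := (N.orthogonalProjectionOnto u).2
      have hu₂ : u - u₁ ∈ Nᗮ := N.sub_starProjection_mem_orthogonal u
      have hu₂T : u - u₁ ∈ T.adjoint.domain := by
        refine mem_adjoint_domain_of_exists _ ⟨0, fun x => ?_⟩
        rw [inner_zero_left]
        exact ((N.mem_orthogonal' _).1 hu₂ _ (hTxN x)).symm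
      have hAu₂ : T.adjoint ⟨u - u₁, hu₂T⟩ = 0 := by
        refine adjoint_apply_eq hT_dense _ (fun x => ?_)
        rw [inner_zero_left]
        exact ((N.mem_orthogonal' _).1 hu₂ _ (hTxN x)).symm
      have hu₁T : u₁ ∈ T.adjoint.domain := by
        have h := T.adjoint.domain.sub_mem huT hu₂T
        simpa using h
      have hAu₁ : T.adjoint ⟨u₁, hu₁T⟩ = T.adjoint ⟨u, huT⟩ := by
        have hsum : (⟨u, huT⟩ : T.adjoint.domain) = ⟨u₁, hu₁T⟩ + ⟨u - u₁, hu₂T⟩ := by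
          ext; simp
        rw [hsum, T.adjoint.map_add, hAu₂, add_zero]
      obtain ⟨hu₁S, hSu₁⟩ := (hN_mem u₁).1 hu₁N
      have hest := hEst u₁ hu₁S hu₁T
      rw [hSu₁, hAu₁] at hest
      simp only [norm_zero] at hest
      have hug : (inner ℂ u g : ℂ) = inner ℂ u₁ g := by
        have h0 : (inner ℂ (u - u₁) g : ℂ) = 0 := (N.mem_orthogonal' _).1 hu₂ g hgN
        rw [inner_sub_left] at h0
        linear_combination h0
      rw [hug]
      have h2 : ‖(inner ℂ u₁ g : ℂ)‖ ^ 2 ≤ (C * ‖T.adjoint ⟨u, huT⟩‖) ^ 2 := by nlinarith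
      exact le_of_pow_le_pow_left₀ two_ne_zero
        (mul_nonneg hC.le (norm_nonneg _)) h2
    -- the linear functional on the range of the adjoint
    set A : T.adjoint.domain →ₗ[ℂ] H₁ := T.adjoint.toFun with hA_def
    set lam : T.adjoint.domain →ₗ[ℂ] ℂ :=
      (innerₛₗ ℂ g).comp T.adjoint.domain.subtype with hlam_def
    have hlam_apply : ∀ u : T.adjoint.domain, lam u = inner ℂ g (u : H₂) := fun u => rfl
    have hA_apply : ∀ u : T.adjoint.domain, A u = T.adjoint u := fun u => rfl
    have hker : LinearMap.ker A ≤ LinearMap.ker lam := by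
      intro u hu
      rw [LinearMap.mem_ker] at hu ⊢
      have h := key u u.2
      rw [hlam_apply]
      have : T.adjoint ⟨(u : H₂), u.2⟩ = 0 := by rw [← hA_apply]; exact hu
      rw [this, norm_zero, mul_zero] at h
      have h0 : (inner ℂ (u : H₂) g : ℂ) = 0 :=
        norm_le_zero_iff.1 h
      rw [← inner_conj_symm, h0]
      exact RingHom.map_zero _
    set φ : (LinearMap.range A) →ₗ[ℂ] ℂ :=
      ((LinearMap.ker A).liftQ lam hker).comp A.quotKerEquivRange.symm.toLinearMap with hφ_def
    have hφeq : ∀ (u : T.adjoint.domain) (h : A u ∈ LinearMap.range A),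
        φ ⟨A u, h⟩ = lam u := by
      intro u h
      rw [hφ_def]
      simp only [LinearMap.comp_apply, LinearEquiv.coe_toLinearMap]
      rw [A.quotKerEquivRange_symm_apply_image u h]
      rw [Submodule.mkQ_apply, Submodule.liftQ_apply]
    have hφ_bound : ∀ w : LinearMap.range A, ‖φ w‖ ≤ C * ‖(w : H₁)‖ := by
      rintro ⟨w, u, rfl⟩
      rw [hφeq u ⟨u, rfl⟩, hlam_apply]
      have h1 : ‖(inner ℂ g (u : H₂) : ℂ)‖ = ‖(inner ℂ (u : H₂) g : ℂ)‖ := by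
        rw [← inner_conj_symm, RCLike.norm_conj]
      rw [h1]
      have h2 := key u u.2
      have h3 : T.adjoint ⟨(u : H₂), u.2⟩ = A u := rfl
      rw [h3] at h2
      exact h2
    set φc : (LinearMap.range A) →L[ℂ] ℂ := φ.mkContinuous C hφ_bound with hφc_def
    obtain ⟨Φ, hΦext, hΦnorm⟩ := exists_extension_norm_eq (LinearMap.range A) φc
    have hΦle : ‖Φ‖ ≤ C := by
      rw [hΦnorm]
      exact φ.mkContinuous_norm_le hC.le hφ_bound
    set v : H₁ := (InnerProductSpace.toDual ℂ H₁).symm Φ with hv_def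
    have hvnorm : ‖v‖ ≤ C := by
      rw [hv_def]
      rw [LinearIsometryEquiv.norm_map]
      exact hΦle
    have hv : ∀ u : T.adjoint.domain, (inner ℂ v (A u) : ℂ) = inner ℂ g (u : H₂) := by
      intro u
      have h1 : (inner ℂ v (A u) : ℂ) = Φ (A u) := by
        rw [hv_def]
        exact InnerProductSpace.toDual_symm_apply
      have h2 : Φ (A u) = φc ⟨A u, ⟨u, rfl⟩⟩ := hΦext ⟨A u, ⟨u, rfl⟩⟩
      have h3 : φc ⟨A u, ⟨u, rfl⟩⟩ = φ ⟨A u, ⟨u, rfl⟩⟩ := rfl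
      rw [h1, h2, h3, hφeq u ⟨u, rfl⟩, hlam_apply]
    -- now show `(v, g)` lies in the graph of `T` via orthogonality in the product space
    set e2 := WithLp.linearEquiv 2 ℂ (H₁ × H₂) with he2_def
    set G : Submodule ℂ (WithLp 2 (H₁ × H₂)) := T.graph.comap e2.toLinearMap with hG_def
    have hG_closed : IsClosed (G : Set (WithLp 2 (H₁ × H₂))) := by
      have hcont : Continuous (e2 : WithLp 2 (H₁ × H₂) → H₁ × H₂) :=
        (WithLp.prodContinuousLinearEquiv 2 ℂ H₁ H₂).continuous
      have : (G : Set (WithLp 2 (H₁ × H₂)))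
          = (e2 : WithLp 2 (H₁ × H₂) → H₁ × H₂) ⁻¹' (T.graph : Set (H₁ × H₂)) := rfl
      rw [this]
      exact hT_closed.preimage hcont
    haveI : CompleteSpace G := hG_closed.completeSpace_coe
    have hvg : e2.symm (v, g) ∈ G := by
      rw [← Submodule.orthogonal_orthogonal G]
      rw [Submodule.mem_orthogonal]
      intro w hw
      set a : H₁ := (e2 w).1 with ha_def
      set b : H₂ := (e2 w).2 with hb_def
      have hwab : ∀ x : T.domain, (inner ℂ (x : H₁) a : ℂ) + inner ℂ (T x) b = 0 := by
        intro x
        have hmem : e2.symm ((x : H₁), T x) ∈ G := by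
          rw [hG_def, Submodule.mem_comap]
          simp only [LinearEquiv.coe_toLinearMap, LinearEquiv.apply_symm_apply]
          exact T.mem_graph x
        have h0 := (Submodule.mem_orthogonal G w).1 hw _ hmem
        rw [WithLp.prod_inner_apply] at h0
        convert h0 using 2 <;> rfl
      have hbT : b ∈ T.adjoint.domain := by
        refine mem_adjoint_domain_of_exists _ ⟨-a, fun x => ?_⟩
        have h := hwab x
        have h' := congrArg (starRingEnd ℂ) h
        simp only [_root_.map_add, inner_conj_symm, _root_.map_zero] at h'
        rw [inner_neg_left]
        linear_combination -h'
      have hTb : T.adjoint ⟨b, hbT⟩ = -a := by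
        refine adjoint_apply_eq hT_dense _ (fun x => ?_)
        have h := hwab x
        have h' := congrArg (starRingEnd ℂ) h
        simp only [_root_.map_add, inner_conj_symm, _root_.map_zero] at h'
        rw [inner_neg_left]
        linear_combination -h'
      have hva : (inner ℂ a v : ℂ) = - inner ℂ b g := by
        have h1 := hv ⟨b, hbT⟩
        have h2 : A ⟨b, hbT⟩ = T.adjoint ⟨b, hbT⟩ := rfl
        rw [h2, hTb] at h1
        have h3 := congrArg (starRingEnd ℂ) h1
        rw [inner_conj_symm, inner_conj_symm] at h3
        rw [inner_neg_left] at h3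
        linear_combination -h3
      rw [WithLp.prod_inner_apply]
      have hfst : ((e2.symm (v, g)).ofLp.1 : H₁) = v := rfl
      have hsnd : ((e2.symm (v, g)).ofLp.2 : H₂) = g := rfl
      show (inner ℂ (e2 w).1 (e2.symm (v, g)).ofLp.1 : ℂ) + inner ℂ (e2 w).2 (e2.symm (v, g)).ofLp.2 = 0
      rw [hfst, hsnd, ← ha_def, ← hb_def, hva]
      ring
    have hgraph : ((v, g) : H₁ × H₂) ∈ T.graph := by
      have := hvg
      rw [hG_def, Submodule.mem_comap] at this
      simpa using this
    rcases T.mem_graph_iff.1 hgraph with ⟨x, hx1, hx2⟩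
    exact ⟨x, hx2, by rw [hx1]; exact hvnorm⟩
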